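/- Let g : ℕ → ℂ be an arithmetic function and define f : ℕ^k → ℂ by f(n₁,…,n_k) = g(gcd(n₁,…,n_k)). Then the k-variable Möbius inverse of f is the principal function of μ∗g: (μ_k ∗_k f)(n₁,…,n_k) = (μ∗g)(n) if n₁ = ⋯ = n_k = n, and 0 otherwise. -/

import Mathlib

open Finset ArithmeticFunction

private lemma sum_moebius_divisors_eq (m : ℕ) (hm : m ≠ 0) :
    ∑ e ∈ m.divisors, ((moebius e : ℤ) : ℂ) = if m = 1 then 1 else 0 := by
  have h : ((moebius * zeta : ArithmeticFunction ℤ) m : ℂ) = ((1 : ArithmeticFunction ℤ) m : ℂ) := by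
    rw [moebius_mul_coe_zeta]
  rw [mul_apply, one_apply] at h
  rw [Nat.sum_divisorsAntidiagonal (f := fun a b => (moebius a : ℤ) * (zeta : ArithmeticFunction ℤ) b)]
    at h
  push_cast at h
  rw [← h]
  refine Finset.sum_congr rfl fun e he => ?_
  have h1 : e ∣ m := (Nat.mem_divisors.mp he).1
  have h2 : m / e ≠ 0 := Nat.div_ne_zero_iff_of_dvd h1 |>.mpr ⟨hm, (Nat.pos_of_mem_divisors he).ne'⟩
  simp [natCoe_apply, zeta_apply, h2]

theorem moebius_inverse_of_gcd_function (k : ℕ) (hk : 0 < k) (g : ℕ → ℂ)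
    (n : Fin k → ℕ) (hn : ∀ i, 0 < n i) :
    ∑ d ∈ Fintype.piFinset (fun i => (n i).divisors),
      (∏ i, (ArithmeticFunction.moebius (d i) : ℂ)) *
        g (Finset.univ.gcd (fun i => n i / d i))
      = if ∀ i, n i = n ⟨0, hk⟩ then
          ∑ e ∈ (n ⟨0, hk⟩).divisors,
            (ArithmeticFunction.moebius e : ℂ) * g (n ⟨0, hk⟩ / e)
        else 0 := by
  classical
  set i0 : Fin k := ⟨0, hk⟩ with hi0
  set n0 : ℕ := n i0 with hn0
  set h : ℕ → ℂ := fun m => ∑ e ∈ m.divisors, ((moebius e : ℤ) : ℂ) * g (m / e) with hh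
  -- Möbius inversion: g m = ∑_{c ∣ m} h c
  have hg : ∀ m, 0 < m → g m = ∑ c ∈ m.divisors, h c := by
    have := (sum_eq_iff_sum_mul_moebius_eq (R := ℂ) (f := h) (g := g)).mpr ?_
    · exact fun m hm => (this m hm).symm
    · intro m hm
      rw [Nat.sum_divisorsAntidiagonal (f := fun a b => ((moebius a : ℤ) : ℂ) * g b)]
  set N : ℕ := Finset.univ.gcd n with hN
  have hNne : N ≠ 0 := by
    intro h0
    exact (hn i0).ne' (Finset.gcd_eq_zero_iff.mp h0 i0 (mem_univ _))
  -- Step 1: rewrite each summand as a sum over divisors of N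
  have step1 : ∀ d ∈ Fintype.piFinset (fun i => (n i).divisors),
      (∏ i, ((moebius (d i) : ℤ) : ℂ)) * g (Finset.univ.gcd (fun i => n i / d i))
        = ∑ c ∈ N.divisors,
            h c * ∏ i, (((moebius (d i) : ℤ) : ℂ) * if c ∣ n i / d i then 1 else 0) := by
    intro d hd
    have hdi : ∀ i, d i ∈ (n i).divisors := fun i => Fintype.mem_piFinset.mp hd i
    set M : ℕ := Finset.univ.gcd (fun i => n i / d i) with hM
    have hdiv : ∀ i, n i / d i ≠ 0 := by
      intro i
      exact (Nat.div_pos (Nat.le_of_dvd (hn i) (Nat.mem_divisors.mp (hdi i)).1)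
        (Nat.pos_of_mem_divisors (hdi i))).ne'
    have hMne : M ≠ 0 := by
      intro h0
      exact hdiv i0 (Finset.gcd_eq_zero_iff.mp h0 i0 (mem_univ _))
    have hMN : M ∣ N := by
      refine Finset.dvd_gcd fun i _ => ?_
      exact (Finset.gcd_dvd (mem_univ i)).trans (Nat.div_dvd_of_dvd (Nat.mem_divisors.mp (hdi i)).1)
    rw [hg M (Nat.pos_of_ne_zero hMne)]
    rw [← Nat.divisors_filter_dvd_of_dvd hNne hMN, Finset.sum_filter, Finset.mul_sum]
    refine Finset.sum_congr rfl fun c _ => ?_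
    have hcM : (c ∣ M) ↔ ∀ i, c ∣ n i / d i := by
      rw [hM, Finset.dvd_gcd_iff]
      exact ⟨fun H i => H i (mem_univ i), fun H i _ => H i⟩
    rw [Finset.prod_mul_distrib, Fintype.prod_boole]
    rw [if_congr hcM rfl rfl]
    split_ifs <;> ring
  rw [Finset.sum_congr rfl step1, Finset.sum_comm]
  -- Step 2: evaluate the inner sums
  have step2 : ∀ c ∈ N.divisors,
      (∑ d ∈ Fintype.piFinset (fun i => (n i).divisors),
        h c * ∏ i, (((moebius (d i) : ℤ) : ℂ) * if c ∣ n i / d i then 1 else 0))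
      = h c * if ∀ i, n i = c then 1 else 0 := by
    intro c hc
    have hcN : c ∣ N := (Nat.mem_divisors.mp hc).1
    have hcpos : 0 < c := Nat.pos_of_mem_divisors hc
    rw [← Finset.mul_sum,
      ← Finset.prod_univ_sum (fun i => (n i).divisors)
        (fun i e => (((moebius e : ℤ) : ℂ) * if c ∣ n i / e then 1 else 0))]
    congr 1
    trans ∏ i, if n i = c then (1:ℂ) else 0
    swap
    · rw [Fintype.prod_boole]; congr 1
    refine Finset.prod_congr rfl fun i _ => ?_
    have hcn : c ∣ n i := hcN.trans (Finset.gcd_dvd (mem_univ i))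
    have hfilter : {e ∈ (n i).divisors | c ∣ n i / e} = (n i / c).divisors := by
      ext e
      simp only [Finset.mem_filter, Nat.mem_divisors]
      constructor
      · rintro ⟨⟨he, hne⟩, hce⟩
        refine ⟨?_, Nat.div_ne_zero_iff_of_dvd hcn |>.mpr ⟨hne, hcpos.ne'⟩⟩
        rw [Nat.dvd_div_iff_mul_dvd hcn]
        have := (Nat.dvd_div_iff_mul_dvd he).mp hce
        rwa [mul_comm] at this
      · rintro ⟨he, hne⟩
        have hec : c * e ∣ n i := (Nat.dvd_div_iff_mul_dvd hcn).mp he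
        have hei : e ∣ n i := (dvd_mul_left e c).trans hec
        refine ⟨⟨hei, (hn i).ne'⟩, ?_⟩
        rw [Nat.dvd_div_iff_mul_dvd hei]
        rwa [mul_comm] at hec
    have hnic : n i / c = 1 ↔ n i = c := by
      constructor
      · intro h1
        have := Nat.div_mul_cancel hcn
        rw [h1, one_mul] at this
        exact this.symm
      · intro h1; rw [h1, Nat.div_self hcpos]
    calc ∑ e ∈ (n i).divisors, (((moebius e : ℤ) : ℂ) * if c ∣ n i / e then 1 else 0)
        = ∑ e ∈ {e ∈ (n i).divisors | c ∣ n i / e}, ((moebius e : ℤ) : ℂ) := by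
          rw [Finset.sum_filter]
          exact Finset.sum_congr rfl fun e _ => by split_ifs <;> simp
      _ = ∑ e ∈ (n i / c).divisors, ((moebius e : ℤ) : ℂ) := by rw [hfilter]
      _ = if n i / c = 1 then 1 else 0 := by
          exact sum_moebius_divisors_eq _ ((Nat.div_ne_zero_iff_of_dvd hcn).mpr
            ⟨(hn i).ne', hcpos.ne'⟩)
      _ = if n i = c then 1 else 0 := by rw [if_congr hnic rfl rfl]
  rw [Finset.sum_congr rfl step2]
  -- Step 3: conclude
  by_cases hcase : ∀ i, n i = n0
  · rw [if_pos hcase]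
    have hmem : n0 ∈ N.divisors :=
      Nat.mem_divisors.mpr ⟨Finset.dvd_gcd fun i _ => (hcase i) ▸ dvd_rfl, hNne⟩
    have : ∀ c ∈ N.divisors, (h c * if ∀ i, n i = c then 1 else 0)
        = if c = n0 then h c else 0 := by
      intro c _
      have : (∀ i, n i = c) ↔ c = n0 := by
        constructor
        · intro H; rw [← H i0, hcase i0]
        · intro H i; rw [hcase i, H]
      rw [if_congr this rfl rfl]
      split_ifs <;> simp
    rw [Finset.sum_congr rfl this, Finset.sum_ite_eq' N.divisors n0 h, if_pos hmem]
  · rw [if_neg hcase]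
    refine Finset.sum_eq_zero fun c _ => ?_
    have : ¬ ∀ i, n i = c := by
      intro H
      exact hcase fun i => by rw [H i, ← H i0]
    rw [if_neg this, mul_zero]
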